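/- arXiv:1312.5249 — 2 statements merged into one kernel-verified Lean document; each statement's English description precedes it below -/
import Mathlib

section
/- For real numbers β ≥ γ ≥ 0 with β + γ > 1, and integers k₁, k₂, the sum over n ∈ ℤ of 1/(⟨n - k₁⟩^β ⟨n - k₂⟩^γ) is bounded by a constant (depending only on β, γ) times ⟨k₁ - k₂⟩^{-γ} φ_β(k₁ - k₂), where φ_β(k) = 1 if β > 1, φ_β(k) = log(1 + ⟨k⟩) if β = 1, and φ_β(k) = ⟨k⟩^{1-β} if β < 1. -/
open Real

/-- Japanese bracket. -/
noncomputable def jb (x : ℝ) : ℝ := Real.sqrt (1 + x ^ 2)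

lemma jb_nonneg (x : ℝ) : 0 ≤ jb x := Real.sqrt_nonneg _

lemma one_le_jb (x : ℝ) : 1 ≤ jb x := by
  rw [jb]
  nlinarith [Real.sq_sqrt (show (0:ℝ) ≤ 1 + x^2 by positivity), Real.sqrt_nonneg (1+x^2), sq_nonneg x]

lemma jb_pos (x : ℝ) : 0 < jb x := lt_of_lt_of_le one_pos (one_le_jb x)

lemma jb_mono {x y : ℝ} (h : |x| ≤ |y|) : jb x ≤ jb y := by
  apply Real.sqrt_le_sqrt
  have := abs_nonneg x
  nlinarith [sq_abs x, sq_abs y]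

lemma abs_le_jb (x : ℝ) : |x| ≤ jb x := by
  rw [jb, show |x| = Real.sqrt (x^2) by rw [Real.sqrt_sq_eq_abs]]
  exact Real.sqrt_le_sqrt (by nlinarith)

lemma jb_le_one_add_abs (x : ℝ) : jb x ≤ 1 + |x| := by
  rw [jb, show 1 + |x| = Real.sqrt ((1+|x|)^2) by rw [Real.sqrt_sq (by positivity)]]
  apply Real.sqrt_le_sqrt
  nlinarith [abs_nonneg x, sq_abs x]

lemma jb_neg (x : ℝ) : jb (-x) = jb x := by simp [jb]

/-- if `|x| ≤ 2|y|` then `jb x ≤ 2 jb y`. -/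
lemma jb_le_two_mul {x y : ℝ} (h : |x| ≤ 2 * |y|) : jb x ≤ 2 * jb y := by
  rw [jb, show 2 * jb y = Real.sqrt (4 * (1 + y^2)) by
    rw [jb, show (4:ℝ) * (1+y^2) = 2^2 * (1+y^2) by ring, Real.sqrt_mul (by positivity),
      Real.sqrt_sq (by norm_num)]]
  apply Real.sqrt_le_sqrt
  nlinarith [sq_abs x, sq_abs y, abs_nonneg x, abs_nonneg y]

lemma jb_nat (j : ℕ) : ((j:ℝ) + 1) / 2 ≤ jb j := by
  rcases Nat.eq_zero_or_pos j with rfl | hj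
  · have := one_le_jb (0:ℝ)
    simp only [Nat.cast_zero]
    linarith
  · have h1 : (1:ℝ) ≤ (j:ℝ) := by exact_mod_cast hj
    calc ((j:ℝ)+1)/2 ≤ (j:ℝ) := by linarith
    _ = |(j:ℝ)| := (abs_of_nonneg (by positivity)).symm
    _ ≤ jb j := abs_le_jb _

/-- Bernoulli-type: for `0 < p ≤ 1`, `x ≥ 1`: `p x^(p-1) ≤ x^p - (x-1)^p`. -/
lemma B1 {p x : ℝ} (hp0 : 0 < p) (hp1 : p ≤ 1) (hx : 1 ≤ x) :
    p * x ^ (p - 1) ≤ x ^ p - (x - 1) ^ p := by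
  have hx0 : (0:ℝ) < x := lt_of_lt_of_le one_pos hx
  have hu : (0:ℝ) ≤ 1 - 1/x := by
    have : 1/x ≤ 1 := by rw [div_le_one hx0]; exact hx
    linarith
  have key : (x - 1) ^ p ≤ x ^ p - p * x ^ (p - 1) := by
    have h1 : x - 1 = x * (1 - 1/x) := by field_simp
    rw [h1, Real.mul_rpow (le_of_lt hx0) hu]
    have h2 : (1 - 1/x) ^ p ≤ 1 - p * (1/x) := by
      have := rpow_one_add_le_one_add_mul_self (s := -(1/x)) (p := p)
        (by have : 1/x ≤ 1 := by rw [div_le_one hx0]; exact hx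
            linarith) (le_of_lt hp0) hp1
      calc (1 - 1/x) ^ p = (1 + -(1/x)) ^ p := by ring_nf
      _ ≤ 1 + p * (-(1/x)) := this
      _ = 1 - p * (1/x) := by ring
    calc x ^ p * (1 - 1/x) ^ p ≤ x ^ p * (1 - p * (1/x)) :=
          mul_le_mul_of_nonneg_left h2 (Real.rpow_nonneg (le_of_lt hx0) _)
    _ = x ^ p - p * (x ^ p / x) := by ring
    _ = x ^ p - p * x ^ (p - 1) := by rw [Real.rpow_sub hx0, Real.rpow_one]
  linarith

/-- Bernoulli-type: for `q > 0`, `x ≥ 2`: `q x^(-q-1) ≤ (x-1)^(-q) - x^(-q)`. -/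
lemma B2 {q x : ℝ} (hq : 0 < q) (hx : 2 ≤ x) :
    q * x ^ (-q - 1) ≤ (x - 1) ^ (-q) - x ^ (-q) := by
  have hx0 : (0:ℝ) < x := by linarith
  have hu0 : (0:ℝ) < 1 - 1/x := by
    have : 1/x ≤ 1/2 := by rw [div_le_div_iff₀ hx0 (by norm_num)]; linarith
    linarith
  have h2 : (1 + q/x) * (1 - 1/x) ^ q ≤ 1 := by
    have hlog : (1 - 1/x) ^ q ≤ Real.exp (-(q/x)) := by
      rw [Real.rpow_def_of_pos hu0]
      apply Real.exp_le_exp.mpr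
      have hl : Real.log (1 - 1/x) ≤ -(1/x) := by
        have := Real.log_le_sub_one_of_pos hu0
        linarith
      calc Real.log (1 - 1/x) * q ≤ (-(1/x)) * q := by
            exact mul_le_mul_of_nonneg_right hl (le_of_lt hq)
      _ = -(q/x) := by ring
    have h3 : 1 + q/x ≤ Real.exp (q/x) := by
      have := Real.add_one_le_exp (q/x); linarith
    calc (1 + q/x) * (1 - 1/x) ^ q ≤ (1 + q/x) * Real.exp (-(q/x)) :=
          mul_le_mul_of_nonneg_left hlog (by positivity)
    _ ≤ Real.exp (q/x) * Real.exp (-(q/x)) :=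
          mul_le_mul_of_nonneg_right h3 (le_of_lt (Real.exp_pos _))
    _ = 1 := by rw [← Real.exp_add]; simp
  have h4 : 1 + q/x ≤ (1 - 1/x) ^ (-q) := by
    rw [Real.rpow_neg (le_of_lt hu0), le_inv_comm₀ (by positivity) (Real.rpow_pos_of_pos hu0 _)]
    · rw [inv_eq_one_div, le_div_iff₀ (by positivity)] at *
      linarith [h2]
  have key : x ^ (-q) * (1 + q/x) ≤ (x-1) ^ (-q) := by
    have h1 : x - 1 = x * (1 - 1/x) := by field_simp
    rw [h1, Real.mul_rpow (le_of_lt hx0) (le_of_lt hu0)]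
    exact mul_le_mul_of_nonneg_left h4 (Real.rpow_nonneg (le_of_lt hx0) _)
  have expand : x ^ (-q) * (1 + q/x) = x ^ (-q) + q * x ^ (-q-1) := by
    rw [show x ^ (-q-1) = x ^ (-q) / x by rw [Real.rpow_sub hx0, Real.rpow_one]]
    field_simp
  rw [expand] at key
  linarith

/-- auxiliary version of `phi` taking the "radius" directly. -/
noncomputable def phiR (β R : ℝ) : ℝ :=
  if 1 < β then 1 else if β = 1 then Real.log (1 + R) else R ^ (1 - β)

lemma phiR_nonneg {β R : ℝ} (hR : 1 ≤ R) : 0 ≤ phiR β R := by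
  unfold phiR
  split_ifs
  · norm_num
  · exact Real.log_nonneg (by linarith)
  · exact Real.rpow_nonneg (by linarith) _

/-- tail of the `p`-series. -/
lemma tail_sum {s : ℝ} (hs : 1 < s) {m : ℕ} (hm : 1 ≤ m) :
    ∑' i : ℕ, ((m : ℝ) + 1 + i) ^ (-s) ≤ (m : ℝ) ^ (1 - s) / (s - 1) := by
  have hm1 : (1:ℝ) ≤ (m:ℝ) := by exact_mod_cast hm
  set g : ℕ → ℝ := fun i => ((m:ℝ) + i) ^ (1 - s) with hg
  apply Real.tsum_le_of_sum_range_le (fun n => Real.rpow_nonneg (by positivity) _)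
  intro J
  have step : ∀ i : ℕ, ((m : ℝ) + 1 + i) ^ (-s) ≤ (g i - g (i+1)) / (s - 1) := by
    intro i
    have hx : (2:ℝ) ≤ (m:ℝ) + 1 + i := by
      have : (0:ℝ) ≤ (i:ℝ) := by positivity
      linarith
    have hb := B2 (q := s - 1) (x := (m:ℝ) + 1 + i) (by linarith) hx
    rw [show -(s-1)-1 = -s by ring, show -(s-1) = 1-s by ring,
      show (m:ℝ)+1+(i:ℝ) - 1 = (m:ℝ)+(i:ℝ) by ring] at hb
    rw [le_div_iff₀ (by linarith : (0:ℝ) < s - 1)]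
    have : g (i+1) = ((m:ℝ) + 1 + i) ^ (1-s) := by
      simp only [hg]; push_cast; ring_nf
    rw [this, hg]
    simp only []
    nlinarith [hb]
  calc ∑ i ∈ Finset.range J, ((m : ℝ) + 1 + i) ^ (-s)
      ≤ ∑ i ∈ Finset.range J, (g i - g (i+1)) / (s - 1) :=
        Finset.sum_le_sum (fun i _ => step i)
  _ = (∑ i ∈ Finset.range J, (g i - g (i+1))) / (s - 1) := by rw [Finset.sum_div]
  _ = (g 0 - g J) / (s - 1) := by rw [Finset.sum_range_sub' g]
  _ ≤ g 0 / (s - 1) := by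
        apply div_le_div_of_nonneg_right _ (by linarith)
        have : 0 ≤ g J := Real.rpow_nonneg (by positivity) _
        linarith
  _ = (m : ℝ) ^ (1 - s) / (s - 1) := by simp [hg]

lemma Qlt {β : ℝ} (hβ0 : 0 ≤ β) (hβ : β < 1) (N : ℕ) :
    ∑ j ∈ Finset.range N, ((j : ℝ) + 1) ^ (-β) ≤ (N : ℝ) ^ (1 - β) / (1 - β) := by
  set g : ℕ → ℝ := fun j => (j:ℝ) ^ (1 - β) with hg
  have step : ∀ j : ℕ, ((j : ℝ) + 1) ^ (-β) ≤ (g (j+1) - g j) / (1 - β) := by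
    intro j
    have hx : (1:ℝ) ≤ (j:ℝ) + 1 := by
      have : (0:ℝ) ≤ (j:ℝ) := Nat.cast_nonneg j
      linarith
    have hb := B1 (p := 1 - β) (x := (j:ℝ) + 1) (by linarith) (by linarith) hx
    rw [show 1-β-1 = -β by ring, show (j:ℝ)+1-1 = (j:ℝ) by ring] at hb
    rw [le_div_iff₀ (by linarith : (0:ℝ) < 1 - β)]
    have : g (j+1) = ((j:ℝ) + 1) ^ (1-β) := by simp only [hg]; push_cast; ring_nf
    rw [this, hg]
    simp only []
    nlinarith [hb]
  calc ∑ j ∈ Finset.range N, ((j : ℝ) + 1) ^ (-β)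
      ≤ ∑ j ∈ Finset.range N, (g (j+1) - g j) / (1 - β) :=
        Finset.sum_le_sum (fun j _ => step j)
  _ = (∑ j ∈ Finset.range N, (g (j+1) - g j)) / (1 - β) := by rw [Finset.sum_div]
  _ = (g N - g 0) / (1 - β) := by rw [Finset.sum_range_sub g]
  _ = (N : ℝ) ^ (1 - β) / (1 - β) := by
        simp [hg, Real.zero_rpow (by linarith : 1 - β ≠ 0)]

lemma Qeq (N : ℕ) :
    ∑ j ∈ Finset.range N, ((j : ℝ) + 1) ^ (-(1:ℝ)) ≤ 1 + Real.log N := by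
  set g : ℕ → ℝ := fun j => Real.log (j:ℝ) with hg
  have step : ∀ j : ℕ, ((j : ℝ) + 1) ^ (-(1:ℝ))
      ≤ (g (j+1) - g j) + (if j = 0 then (1:ℝ) else 0) := by
    intro j
    have hrw : ((j : ℝ) + 1) ^ (-(1:ℝ)) = ((j:ℝ)+1)⁻¹ := by
      rw [Real.rpow_neg_one]
    rcases Nat.eq_zero_or_pos j with rfl | hj
    · simp [hrw, hg]
    · have hj1 : (1:ℝ) ≤ (j:ℝ) := by exact_mod_cast hj
      have hlog : Real.log ((j:ℝ)/((j:ℝ)+1)) ≤ (j:ℝ)/((j:ℝ)+1) - 1 :=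
        Real.log_le_sub_one_of_pos (by positivity)
      have hdiv : Real.log ((j:ℝ)/((j:ℝ)+1)) = g j - g (j+1) := by
        rw [Real.log_div (by positivity) (by positivity)]
        simp only [hg]; push_cast; ring_nf
      have h2 : (j:ℝ)/((j:ℝ)+1) - 1 = -(((j:ℝ)+1)⁻¹) := by field_simp; ring
      rw [hdiv, h2] at hlog
      simp only [if_neg (Nat.pos_iff_ne_zero.mp hj), add_zero, hrw]
      linarith
  calc ∑ j ∈ Finset.range N, ((j : ℝ) + 1) ^ (-(1:ℝ))
      ≤ ∑ j ∈ Finset.range N, ((g (j+1) - g j) + (if j = 0 then (1:ℝ) else 0)) :=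
        Finset.sum_le_sum (fun j _ => step j)
  _ = (g N - g 0) + ∑ j ∈ Finset.range N, (if j = 0 then (1:ℝ) else 0) := by
        rw [Finset.sum_add_distrib, Finset.sum_range_sub g]
  _ ≤ Real.log N + 1 := by
        have h1 : g 0 = 0 := by simp [hg]
        have h2 : ∑ j ∈ Finset.range N, (if j = 0 then (1:ℝ) else 0) ≤ 1 := by
          rw [Finset.sum_ite_eq' (Finset.range N) 0 (fun _ => (1:ℝ))]
          split_ifs <;> norm_num
        simp only [hg] at h1 ⊢
        linarith
  _ = 1 + Real.log N := by ring

lemma Qgt {β : ℝ} (hβ : 1 < β) (N : ℕ) :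
    ∑ j ∈ Finset.range N, ((j : ℝ) + 1) ^ (-β) ≤ 1 + 1 / (β - 1) := by
  rcases Nat.eq_zero_or_pos N with rfl | hN
  · simp
    have : (0:ℝ) < β - 1 := by linarith
    positivity
  obtain ⟨M, rfl⟩ : ∃ M, N = M + 1 := ⟨N - 1, (Nat.succ_pred_eq_of_pos hN).symm⟩
  rw [Finset.sum_range_succ']
  set g : ℕ → ℝ := fun i => ((i:ℝ) + 1) ^ (1 - β) with hg
  have step : ∀ i : ℕ, (((i+1 : ℕ) : ℝ) + 1) ^ (-β) ≤ (g i - g (i+1)) / (β - 1) := by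
    intro i
    have hx : (2:ℝ) ≤ ((i+1:ℕ):ℝ) + 1 := by push_cast; linarith [Nat.cast_nonneg (α := ℝ) i]
    have hb := B2 (q := β - 1) (x := ((i+1:ℕ):ℝ) + 1) (by linarith) hx
    rw [show -(β-1)-1 = -β by ring, show -(β-1) = 1-β by ring] at hb
    rw [le_div_iff₀ (by linarith : (0:ℝ) < β - 1)]
    have h1 : (((i+1:ℕ):ℝ) + 1) - 1 = (i:ℝ) + 1 := by push_cast; ring
    have h2 : g (i+1) = (((i+1:ℕ):ℝ) + 1) ^ (1-β) := by simp only [hg]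
    rw [h1] at hb
    rw [h2, hg]
    simp only []
    nlinarith [hb]
  have tele : ∑ i ∈ Finset.range M, (((i+1 : ℕ) : ℝ) + 1) ^ (-β) ≤ 1 / (β - 1) := by
    calc ∑ i ∈ Finset.range M, (((i+1 : ℕ) : ℝ) + 1) ^ (-β)
        ≤ ∑ i ∈ Finset.range M, (g i - g (i+1)) / (β - 1) :=
          Finset.sum_le_sum (fun i _ => step i)
    _ = (∑ i ∈ Finset.range M, (g i - g (i+1))) / (β - 1) := by rw [Finset.sum_div]
    _ = (g 0 - g M) / (β - 1) := by rw [Finset.sum_range_sub' g]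
    _ ≤ g 0 / (β - 1) := by
          apply div_le_div_of_nonneg_right _ (by linarith)
          have : 0 ≤ g M := Real.rpow_nonneg (by positivity) _
          linarith
    _ = 1 / (β - 1) := by simp [hg]
  have h0 : (((0:ℕ):ℝ) + 1) ^ (-β) = 1 := by norm_num
  rw [h0]
  linarith [tele]

lemma nat_partial_aux {β : ℝ} (hβ0 : 0 ≤ β) {R : ℝ} (hR : 1 ≤ R) :
    ∑' j : ℕ, (if (j:ℝ) ≤ R then jb (j:ℝ) ^ (-β) else 0)
      ≤ 2 ^ β * ∑ j ∈ Finset.range (⌊R⌋₊ + 1), ((j:ℝ) + 1) ^ (-β) := by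
  set N := ⌊R⌋₊ + 1 with hN
  have h0 : ∑' j : ℕ, (if (j:ℝ) ≤ R then jb (j:ℝ) ^ (-β) else 0)
      = ∑ j ∈ Finset.range N, (if (j:ℝ) ≤ R then jb (j:ℝ) ^ (-β) else 0) := by
    apply tsum_eq_sum
    intro j hj
    rw [Finset.mem_range, not_lt] at hj
    have h1 : R < (j:ℝ) := by
      have h2 : R < (⌊R⌋₊ : ℝ) + 1 := Nat.lt_floor_add_one R
      have h3 : ((N:ℕ):ℝ) ≤ (j:ℝ) := by exact_mod_cast hj
      have h4 : ((N:ℕ):ℝ) = (⌊R⌋₊ : ℝ) + 1 := by rw [hN]; push_cast; ring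
      linarith [h4 ▸ h3]
    rw [if_neg (by linarith)]
  rw [h0, Finset.mul_sum]
  apply Finset.sum_le_sum
  intro j _
  have hterm : (if (j:ℝ) ≤ R then jb (j:ℝ) ^ (-β) else 0) ≤ jb (j:ℝ) ^ (-β) := by
    split_ifs
    · exact le_refl _
    · exact Real.rpow_nonneg (jb_nonneg _) _
  have h2 : jb (j:ℝ) ^ (-β) ≤ 2 ^ β * ((j:ℝ) + 1) ^ (-β) := by
    have h3 : jb (j:ℝ) ^ (-β) ≤ (((j:ℝ) + 1)/2) ^ (-β) := by
      apply Real.rpow_le_rpow_of_nonpos (by positivity) (jb_nat j) (by linarith)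
    have h4 : (((j:ℝ) + 1)/2) ^ (-β) = 2 ^ β * ((j:ℝ) + 1) ^ (-β) := by
      rw [Real.div_rpow (by positivity) (by norm_num), Real.rpow_neg (by norm_num : (0:ℝ) ≤ 2)]
      field_simp
    linarith
  linarith

lemma nat_partial {β : ℝ} (hβ0 : 0 ≤ β) :
    ∃ C > 0, ∀ R : ℝ, 1 ≤ R →
      ∑' j : ℕ, (if (j:ℝ) ≤ R then jb (j:ℝ) ^ (-β) else 0) ≤ C * phiR β R := by
  rcases lt_trichotomy β 1 with hβ | hβ | hβ
  · -- β < 1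
    refine ⟨2 ^ β * 2 / (1 - β), by have h := sub_pos.mpr hβ; positivity, fun R hR => ?_⟩
    have hφ : phiR β R = R ^ (1 - β) := by
      unfold phiR
      rw [if_neg (by linarith), if_neg (by linarith)]
    rw [hφ]
    calc ∑' j : ℕ, (if (j:ℝ) ≤ R then jb (j:ℝ) ^ (-β) else 0)
        ≤ 2 ^ β * ∑ j ∈ Finset.range (⌊R⌋₊ + 1), ((j:ℝ) + 1) ^ (-β) :=
          nat_partial_aux hβ0 hR
    _ ≤ 2 ^ β * (((⌊R⌋₊ + 1 : ℕ) : ℝ) ^ (1 - β) / (1 - β)) := by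
          have := Qlt hβ0 hβ (⌊R⌋₊ + 1)
          have h2 : (0:ℝ) < 2 ^ β := by positivity
          nlinarith
    _ ≤ 2 ^ β * 2 / (1 - β) * R ^ (1 - β) := by
          have hN : ((⌊R⌋₊ + 1 : ℕ) : ℝ) ≤ 2 * R := by
            push_cast
            have := Nat.floor_le (by linarith : (0:ℝ) ≤ R)
            linarith
          have h5 : ((⌊R⌋₊ + 1 : ℕ) : ℝ) ^ (1 - β) ≤ (2*R) ^ (1 - β) :=
            Real.rpow_le_rpow (by positivity) hN (by linarith)
          have h6 : (2*R) ^ (1-β) = 2 ^ (1-β) * R ^ (1-β) :=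
            Real.mul_rpow (by norm_num) (by linarith)
          have h7 : (2:ℝ) ^ (1-β) ≤ 2 := by
            calc (2:ℝ) ^ (1-β) ≤ 2 ^ (1:ℝ) :=
                  Real.rpow_le_rpow_of_exponent_le (by norm_num) (by linarith)
            _ = 2 := Real.rpow_one 2
          have h8 : (0:ℝ) ≤ R ^ (1-β) := Real.rpow_nonneg (by linarith) _
          have h2 : (0:ℝ) < 2 ^ β := by positivity
          have h9 : (0:ℝ) < 1 - β := by linarith
          calc 2 ^ β * (((⌊R⌋₊ + 1 : ℕ) : ℝ) ^ (1 - β) / (1 - β))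
              ≤ 2 ^ β * ((2 ^ (1-β) * R ^ (1-β)) / (1 - β)) := by
                apply mul_le_mul_of_nonneg_left _ (le_of_lt h2)
                apply div_le_div_of_nonneg_right _ (by linarith)
                rw [← h6]; exact h5
          _ ≤ 2 ^ β * ((2 * R ^ (1-β)) / (1 - β)) := by
                apply mul_le_mul_of_nonneg_left _ (le_of_lt h2)
                apply div_le_div_of_nonneg_right _ (by linarith)
                nlinarith
          _ = 2 ^ β * 2 / (1 - β) * R ^ (1 - β) := by ring
  · -- β = 1
    subst hβ
    refine ⟨2 * ((1 + Real.log 2)/Real.log 2 + 1), by positivity, fun R hR => ?_⟩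
    have hlog2 : (0:ℝ) < Real.log 2 := Real.log_pos (by norm_num)
    have hφ : phiR 1 R = Real.log (1 + R) := by
      unfold phiR
      rw [if_neg (by norm_num), if_pos rfl]
    rw [hφ]
    have hlogR : Real.log 2 ≤ Real.log (1 + R) :=
      Real.log_le_log (by norm_num) (by linarith)
    have key : ∑ j ∈ Finset.range (⌊R⌋₊ + 1), ((j:ℝ) + 1) ^ (-(1:ℝ))
        ≤ ((1 + Real.log 2)/Real.log 2 + 1) * Real.log (1 + R) := by
      calc ∑ j ∈ Finset.range (⌊R⌋₊ + 1), ((j:ℝ) + 1) ^ (-(1:ℝ))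
          ≤ 1 + Real.log ((⌊R⌋₊ + 1 : ℕ) : ℝ) := Qeq (⌊R⌋₊ + 1)
      _ ≤ 1 + Real.log (2 * R) := by
            have hN : ((⌊R⌋₊ + 1 : ℕ) : ℝ) ≤ 2 * R := by
              push_cast
              have := Nat.floor_le (by linarith : (0:ℝ) ≤ R)
              linarith
            have := Real.log_le_log (by positivity : (0:ℝ) < ((⌊R⌋₊ + 1 : ℕ) : ℝ)) hN
            linarith
      _ = 1 + Real.log 2 + Real.log R := by
            rw [Real.log_mul (by norm_num) (by linarith : R ≠ 0)]
            ring
      _ ≤ (1 + Real.log 2)/Real.log 2 * Real.log (1 + R) + Real.log (1 + R) := by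
            have h1 : Real.log R ≤ Real.log (1 + R) :=
              Real.log_le_log (by linarith) (by linarith)
            have h2 : 1 + Real.log 2 ≤ (1 + Real.log 2)/Real.log 2 * Real.log (1 + R) := by
              rw [div_mul_eq_mul_div, le_div_iff₀ hlog2]
              have h3 : (0:ℝ) ≤ 1 + Real.log 2 := by linarith
              nlinarith
            linarith
      _ = ((1 + Real.log 2)/Real.log 2 + 1) * Real.log (1 + R) := by ring
    calc ∑' j : ℕ, (if (j:ℝ) ≤ R then jb (j:ℝ) ^ (-(1:ℝ)) else 0)
        ≤ 2 ^ (1:ℝ) * ∑ j ∈ Finset.range (⌊R⌋₊ + 1), ((j:ℝ) + 1) ^ (-(1:ℝ)) :=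
          nat_partial_aux (by norm_num) hR
    _ ≤ 2 ^ (1:ℝ) * (((1 + Real.log 2)/Real.log 2 + 1) * Real.log (1 + R)) := by
          apply mul_le_mul_of_nonneg_left key (by positivity)
    _ = 2 * ((1 + Real.log 2)/Real.log 2 + 1) * Real.log (1 + R) := by
          rw [Real.rpow_one]; ring
  · -- 1 < β
    refine ⟨2 ^ β * (1 + 1/(β-1)), by have h := sub_pos.mpr hβ; positivity, fun R hR => ?_⟩
    have hφ : phiR β R = 1 := by unfold phiR; rw [if_pos hβ]
    rw [hφ, mul_one]
    calc ∑' j : ℕ, (if (j:ℝ) ≤ R then jb (j:ℝ) ^ (-β) else 0)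
        ≤ 2 ^ β * ∑ j ∈ Finset.range (⌊R⌋₊ + 1), ((j:ℝ) + 1) ^ (-β) :=
          nat_partial_aux hβ0 hR
    _ ≤ 2 ^ β * (1 + 1/(β-1)) :=
          mul_le_mul_of_nonneg_left (Qgt hβ (⌊R⌋₊ + 1)) (by positivity)

lemma summable_aux_tail {s : ℝ} (hs : 1 < s) {m : ℕ} (hm : 1 ≤ m) :
    Summable (fun j : ℕ => if j < m then (0:ℝ) else (j:ℝ) ^ (-s)) := by
  apply Summable.of_nonneg_of_le (f := fun j : ℕ => ((j:ℝ) ^ s)⁻¹)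
  · intro j
    split_ifs
    · exact le_refl 0
    · exact Real.rpow_nonneg (Nat.cast_nonneg _) _
  · intro j
    split_ifs with hj
    · positivity
    · rw [Real.rpow_neg (Nat.cast_nonneg _)]
  · exact Real.summable_nat_rpow_inv.mpr hs

lemma nat_tail {s : ℝ} (hs : 1 < s) {R : ℝ} (hR : 0 ≤ R) :
    ∑' j : ℕ, (if R < (j:ℝ) then jb (j:ℝ) ^ (-s) else 0)
      ≤ (1 + 1/(s-1)) * 2 ^ (s-1) * jb R ^ (1-s) := by
  set m := ⌊R⌋₊ + 1 with hmdef
  have hm : 1 ≤ m := Nat.le_add_left 1 _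
  have hm1 : (1:ℝ) ≤ (m:ℝ) := by exact_mod_cast hm
  set h : ℕ → ℝ := fun j => if j < m then (0:ℝ) else (j:ℝ) ^ (-s) with hh
  have hsum : Summable h := summable_aux_tail hs hm
  have hnn : ∀ j, 0 ≤ h j := fun j => by
    simp only [hh]
    split_ifs
    · exact le_refl 0
    · exact Real.rpow_nonneg (Nat.cast_nonneg _) _
  have h_le : ∀ j : ℕ, (if R < (j:ℝ) then jb (j:ℝ) ^ (-s) else 0) ≤ h j := by
    intro j
    simp only [hh]
    split_ifs with h1 h2
    · -- R < j and j < m : impossible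
      exfalso
      have : ⌊R⌋₊ < j := (Nat.floor_lt hR).mpr h1
      omega
    · -- R < j, j ≥ m
      have hj1 : 1 ≤ j := by omega
      have hj1' : (1:ℝ) ≤ (j:ℝ) := by exact_mod_cast hj1
      apply Real.rpow_le_rpow_of_nonpos (by linarith)
      · calc (j:ℝ) = |(j:ℝ)| := (abs_of_nonneg (by positivity)).symm
        _ ≤ jb (j:ℝ) := abs_le_jb _
      · linarith
    · exact le_refl 0
    · exact Real.rpow_nonneg (Nat.cast_nonneg _) _
  have hfsum : Summable (fun j : ℕ => if R < (j:ℝ) then jb (j:ℝ) ^ (-s) else 0) :=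
    Summable.of_nonneg_of_le
      (fun j => by
        split_ifs
        exacts [Real.rpow_nonneg (jb_nonneg _) _, le_refl 0])
      h_le hsum
  have step1 : ∑' j : ℕ, (if R < (j:ℝ) then jb (j:ℝ) ^ (-s) else 0) ≤ ∑' j, h j :=
    Summable.tsum_le_tsum h_le hfsum hsum
  have step2 : ∑' j, h j = ∑' i : ℕ, ((i + m : ℕ) : ℝ) ^ (-s) := by
    rw [← Summable.sum_add_tsum_nat_add m hsum]
    have hz : ∑ i ∈ Finset.range m, h i = 0 :=
      Finset.sum_eq_zero (fun i hi => by
        simp only [hh]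
        rw [if_pos (Finset.mem_range.mp hi)])
    rw [hz, zero_add]
    apply tsum_congr
    intro i
    simp only [hh]
    rw [if_neg (by omega)]
  have hsum2 : Summable (fun i : ℕ => ((i + m : ℕ) : ℝ) ^ (-s)) := by
    have := (summable_nat_add_iff m).mpr hsum
    apply this.congr
    intro i
    simp only [hh]
    rw [if_neg (by omega)]
  have step3 : ∑' i : ℕ, ((i + m : ℕ) : ℝ) ^ (-s)
      ≤ (m:ℝ) ^ (-s) + (m:ℝ) ^ (1-s) / (s-1) := by
    rw [Summable.tsum_eq_zero_add hsum2]
    have h0 : ((0 + m : ℕ) : ℝ) ^ (-s) = (m:ℝ) ^ (-s) := by norm_num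
    rw [h0]
    have h1 : ∑' i : ℕ, ((i + 1 + m : ℕ) : ℝ) ^ (-s)
        = ∑' i : ℕ, ((m:ℝ) + 1 + i) ^ (-s) := by
      apply tsum_congr
      intro i
      congr 1
      push_cast
      ring
    rw [h1]
    have := tail_sum hs hm
    linarith
  have step4 : (m:ℝ) ^ (-s) + (m:ℝ) ^ (1-s) / (s-1) ≤ (1 + 1/(s-1)) * (m:ℝ) ^ (1-s) := by
    have h1 : (m:ℝ) ^ (-s) ≤ (m:ℝ) ^ (1-s) :=
      Real.rpow_le_rpow_of_exponent_le hm1 (by linarith)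
    have h2 : (0:ℝ) < s - 1 := by linarith
    rw [show (1 + 1/(s-1)) * (m:ℝ) ^ (1-s) = (m:ℝ) ^ (1-s) + (m:ℝ) ^ (1-s) / (s-1) by ring]
    linarith
  have step5 : (m:ℝ) ^ (1-s) ≤ 2 ^ (s-1) * jb R ^ (1-s) := by
    have hjb2 : jb R / 2 ≤ (m:ℝ) := by
      have h1 : jb R ≤ 1 + R := by
        have := jb_le_one_add_abs R
        rw [abs_of_nonneg hR] at this
        exact this
      have h2 : R < (m:ℝ) := by
        have := Nat.lt_floor_add_one R
        rw [hmdef]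
        push_cast
        linarith
      linarith
    have h3 : (m:ℝ) ^ (1-s) ≤ (jb R / 2) ^ (1-s) :=
      Real.rpow_le_rpow_of_nonpos (by have := jb_pos R; linarith) hjb2 (by linarith)
    have h4 : (jb R / 2) ^ (1-s) = 2 ^ (s-1) * jb R ^ (1-s) := by
      rw [Real.div_rpow (jb_nonneg _) (by norm_num)]
      rw [show (1:ℝ)-s = -(s-1) by ring, Real.rpow_neg (by norm_num : (0:ℝ) ≤ 2)]
      field_simp
    linarith
  have hpos : (0:ℝ) < 1 + 1/(s-1) := by
    have h2 : (0:ℝ) < s - 1 := by linarith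
    positivity
  calc ∑' j : ℕ, (if R < (j:ℝ) then jb (j:ℝ) ^ (-s) else 0)
      ≤ (1 + 1/(s-1)) * (m:ℝ) ^ (1-s) := by
        rw [step2] at step1
        linarith
  _ ≤ (1 + 1/(s-1)) * (2 ^ (s-1) * jb R ^ (1-s)) :=
        mul_le_mul_of_nonneg_left step5 (le_of_lt hpos)
  _ = (1 + 1/(s-1)) * 2 ^ (s-1) * jb R ^ (1-s) := by ring


lemma int_to_nat {G : ℤ → ℝ} {u : ℕ → ℝ} (h1 : ∀ j : ℕ, G (j : ℤ) = u j)
    (h2 : ∀ j : ℕ, G (-((j:ℤ) + 1)) = u (j + 1)) (hu : Summable u)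
    (hnn : ∀ j, 0 ≤ u j) :
    ∑' m : ℤ, G m ≤ 2 * ∑' j : ℕ, u j := by
  have hu1 : Summable (fun j : ℕ => G (j : ℤ)) := hu.congr (fun j => (h1 j).symm)
  have hu2 : Summable (fun j : ℕ => G (-((j:ℤ) + 1))) :=
    ((summable_nat_add_iff 1).mpr hu).congr (fun j => (h2 j).symm)
  rw [tsum_of_nat_of_neg_add_one hu1 hu2]
  have e1 : ∑' j : ℕ, G (j:ℤ) = ∑' j, u j := tsum_congr h1
  have e2 : ∑' j : ℕ, G (-((j:ℤ)+1)) = ∑' j, u (j+1) := tsum_congr h2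
  have e3 : ∑' j, u (j+1) ≤ ∑' j, u j := by
    rw [Summable.tsum_eq_zero_add hu]
    have := hnn 0
    linarith
  rw [e1, e2]
  linarith

lemma summable_ind_nat {R : ℝ} (w : ℕ → ℝ) :
    Summable (fun j : ℕ => if (j:ℝ) ≤ R then w j else 0) := by
  apply summable_of_ne_finset_zero (s := Finset.range (⌊R⌋₊ + 1))
  intro j hj
  rw [Finset.mem_range, not_lt] at hj
  have h3 : ((⌊R⌋₊ + 1 : ℕ):ℝ) ≤ (j:ℝ) := by exact_mod_cast hj
  have : R < (j:ℝ) := by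
    have h2 := Nat.lt_floor_add_one R
    push_cast at h3
    linarith
  rw [if_neg (not_le.mpr this)]

lemma int_partial {β : ℝ} (hβ0 : 0 ≤ β) :
    ∃ C > 0, ∀ R : ℝ, 1 ≤ R →
      ∑' m : ℤ, (if |(m:ℝ)| ≤ R then jb (m:ℝ) ^ (-β) else 0) ≤ C * phiR β R := by
  obtain ⟨C, hC, hbound⟩ := nat_partial hβ0
  refine ⟨2 * C, by positivity, fun R hR => ?_⟩
  have key := int_to_nat (G := fun m : ℤ => if |(m:ℝ)| ≤ R then jb (m:ℝ) ^ (-β) else 0)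
    (u := fun j : ℕ => if (j:ℝ) ≤ R then jb (j:ℝ) ^ (-β) else 0)
    (fun j => by
      have hc : ((j:ℤ):ℝ) = (j:ℝ) := by push_cast; ring
      simp only [hc, abs_of_nonneg (Nat.cast_nonneg j : (0:ℝ) ≤ (j:ℝ))])
    (fun j => by
      push_cast
      rw [abs_neg, abs_of_nonneg (show (0:ℝ) ≤ (j:ℝ)+1 by positivity), jb_neg])
    (summable_ind_nat _)
    (fun j => by
      split_ifs
      exacts [Real.rpow_nonneg (jb_nonneg _) _, le_refl 0])
  calc ∑' m : ℤ, (if |(m:ℝ)| ≤ R then jb (m:ℝ) ^ (-β) else 0)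
      ≤ 2 * ∑' j : ℕ, (if (j:ℝ) ≤ R then jb (j:ℝ) ^ (-β) else 0) := key
  _ ≤ 2 * (C * phiR β R) := by
        have := hbound R hR
        linarith
  _ = 2 * C * phiR β R := by ring

lemma summable_ind_tail {s : ℝ} (hs : 1 < s) {R : ℝ} (hR : 0 ≤ R) :
    Summable (fun j : ℕ => if R < (j:ℝ) then jb (j:ℝ) ^ (-s) else 0) := by
  apply Summable.of_nonneg_of_le (f := fun j : ℕ => ((j:ℝ) ^ s)⁻¹)
  · intro j
    split_ifs
    exacts [Real.rpow_nonneg (jb_nonneg _) _, le_refl 0]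
  · intro j
    split_ifs with hj
    · have hj1 : (1:ℝ) ≤ (j:ℝ) := by
        have : 0 < j := by
          by_contra hcon
          push_neg at hcon
          interval_cases j
          simp at hj
          linarith
        exact_mod_cast this
      rw [← Real.rpow_neg (by positivity : (0:ℝ) ≤ (j:ℝ))]
      apply Real.rpow_le_rpow_of_nonpos (by linarith)
      · calc (j:ℝ) = |(j:ℝ)| := (abs_of_nonneg (by positivity)).symm
        _ ≤ jb (j:ℝ) := abs_le_jb _
      · linarith
    · positivity
  · exact Real.summable_nat_rpow_inv.mpr hs

lemma int_tail {s : ℝ} (hs : 1 < s) :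
    ∃ C > 0, ∀ R : ℝ, 0 ≤ R →
      ∑' m : ℤ, (if R < |(m:ℝ)| then jb (m:ℝ) ^ (-s) else 0)
        ≤ C * jb R ^ (1 - s) := by
  refine ⟨2 * ((1 + 1/(s-1)) * 2 ^ (s-1)), by have hq := sub_pos.mpr hs; positivity,
    fun R hR => ?_⟩
  have key := int_to_nat (G := fun m : ℤ => if R < |(m:ℝ)| then jb (m:ℝ) ^ (-s) else 0)
    (u := fun j : ℕ => if R < (j:ℝ) then jb (j:ℝ) ^ (-s) else 0)
    (fun j => by
      have hc : ((j:ℤ):ℝ) = (j:ℝ) := by push_cast; ring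
      simp only [hc, abs_of_nonneg (Nat.cast_nonneg j : (0:ℝ) ≤ (j:ℝ))])
    (fun j => by
      push_cast
      rw [abs_neg, abs_of_nonneg (show (0:ℝ) ≤ (j:ℝ)+1 by positivity), jb_neg])
    (summable_ind_tail hs hR)
    (fun j => by
      split_ifs
      exacts [Real.rpow_nonneg (jb_nonneg _) _, le_refl 0])
  calc ∑' m : ℤ, (if R < |(m:ℝ)| then jb (m:ℝ) ^ (-s) else 0)
      ≤ 2 * ∑' j : ℕ, (if R < (j:ℝ) then jb (j:ℝ) ^ (-s) else 0) := key
  _ ≤ 2 * ((1 + 1/(s-1)) * 2 ^ (s-1) * jb R ^ (1-s)) := by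
        have := nat_tail hs hR
        linarith
  _ = 2 * ((1 + 1/(s-1)) * 2 ^ (s-1)) * jb R ^ (1-s) := by ring

lemma summable_shift_rpow {s : ℝ} (hs : 1 < s) :
    Summable (fun j : ℕ => ((j:ℝ) + 1) ^ (-s)) := by
  have h := (summable_nat_add_iff 1).mpr (Real.summable_nat_rpow_inv.mpr hs)
  apply h.congr
  intro j
  push_cast
  rw [Real.rpow_neg (by positivity)]

lemma summable_jb_nat {s : ℝ} (hs : 1 < s) :
    Summable (fun j : ℕ => jb (j:ℝ) ^ (-s)) := by
  apply Summable.of_nonneg_of_le (fun j => Real.rpow_nonneg (jb_nonneg _) _)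
    (f := fun j : ℕ => 2 ^ s * (((j:ℝ) + 1) ^ (-s)))
  · intro j
    have h3 : jb (j:ℝ) ^ (-s) ≤ (((j:ℝ) + 1)/2) ^ (-s) :=
      Real.rpow_le_rpow_of_nonpos (by positivity) (jb_nat j) (by linarith)
    have h4 : (((j:ℝ) + 1)/2) ^ (-s) = 2 ^ s * ((j:ℝ) + 1) ^ (-s) := by
      rw [Real.div_rpow (by positivity) (by norm_num), Real.rpow_neg (by norm_num : (0:ℝ) ≤ 2)]
      field_simp
    linarith
  · exact (summable_shift_rpow hs).mul_left _

lemma summable_jb_int {s : ℝ} (hs : 1 < s) :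
    Summable (fun m : ℤ => jb (m:ℝ) ^ (-s)) := by
  apply Summable.of_nat_of_neg_add_one
  · apply (summable_jb_nat hs).congr
    intro j
    norm_num
  · have h := (summable_nat_add_iff 1).mpr (summable_jb_nat hs)
    apply h.congr
    intro j
    push_cast
    rw [jb_neg]

lemma summable_ind_int {R : ℝ} (w : ℤ → ℝ) :
    Summable (fun m : ℤ => if |(m:ℝ)| ≤ R then w m else 0) := by
  apply summable_of_ne_finset_zero (s := Finset.Icc (-(⌈R⌉ : ℤ)) ⌈R⌉)
  intro m hm
  rw [Finset.mem_Icc] at hm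
  push_neg at hm
  apply if_neg
  intro habs
  have h1 : (m:ℝ) ≤ (⌈R⌉:ℝ) := le_trans (le_trans (le_abs_self _) habs) (Int.le_ceil R)
  have h2 : -((⌈R⌉:ℤ):ℝ) ≤ (m:ℝ) := by
    have h3 : -(m:ℝ) ≤ |(m:ℝ)| := neg_le_abs _
    have := le_trans (le_trans h3 habs) (Int.le_ceil R)
    linarith
  have hm1 : m ≤ ⌈R⌉ := by exact_mod_cast h1
  have hm2 : -⌈R⌉ ≤ m := by exact_mod_cast h2
  exact absurd hm1 (not_le.mpr (hm hm2))

/-- The function `φ_β` describing the size of the sum `∑_{|n| ≤ |k|} ⟨n⟩^{-β}`. -/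
noncomputable def phi (β : ℝ) (k : ℝ) : ℝ :=
  if 1 < β then 1 else if β = 1 then Real.log (1 + jb k) else jb k ^ (1 - β)

lemma phi_pos (β : ℝ) (x : ℝ) : 0 < phi β x := by
  unfold phi
  split_ifs
  · norm_num
  · apply Real.log_pos
    have := one_le_jb x
    linarith
  · exact Real.rpow_pos_of_pos (jb_pos x) _

lemma phi_lower (β : ℝ) : ∃ C > 0, ∀ x : ℝ, jb x ^ (1 - β) ≤ C * phi β x := by
  rcases lt_trichotomy 1 β with hβ | hβ | hβ
  · refine ⟨1, one_pos, fun x => ?_⟩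
    unfold phi
    rw [if_pos hβ, one_mul]
    exact Real.rpow_le_one_of_one_le_of_nonpos (one_le_jb x) (by linarith)
  · refine ⟨1 / Real.log 2, by positivity, fun x => ?_⟩
    unfold phi
    rw [if_neg (by rw [← hβ]; exact lt_irrefl 1), if_pos hβ.symm, ← hβ, sub_self,
      Real.rpow_zero]
    have hlog2 : (0:ℝ) < Real.log 2 := Real.log_pos (by norm_num)
    have h1 : Real.log 2 ≤ Real.log (1 + jb x) :=
      Real.log_le_log (by norm_num) (by linarith [one_le_jb x])
    rw [div_mul_eq_mul_div, le_div_iff₀ hlog2, one_mul]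
    linarith
  · refine ⟨1, one_pos, fun x => ?_⟩
    unfold phi
    rw [if_neg (by linarith), if_neg (by linarith), one_mul]

lemma phiR_three {β : ℝ} (hβ0 : 0 ≤ β) :
    ∃ C > 0, ∀ x : ℝ, phiR β (3 * jb x) ≤ C * phi β x := by
  rcases lt_trichotomy 1 β with hβ | hβ | hβ
  · refine ⟨1, one_pos, fun x => ?_⟩
    unfold phiR phi
    rw [if_pos hβ, if_pos hβ, one_mul]
  · refine ⟨3, by norm_num, fun x => ?_⟩
    unfold phiR phi
    rw [if_neg (by rw [← hβ]; exact lt_irrefl 1), if_pos hβ.symm,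
      if_neg (by rw [← hβ]; exact lt_irrefl 1), if_pos hβ.symm]
    have hy := one_le_jb x
    have h1 : 1 + 3 * jb x ≤ (1 + jb x) ^ (3:ℕ) := by
      have he : (1 + jb x) ^ (3:ℕ) = 1 + 3*jb x + 3*(jb x)^2 + (jb x)^3 := by ring
      rw [he]
      nlinarith [sq_nonneg (jb x), jb_nonneg x]
    calc Real.log (1 + 3 * jb x) ≤ Real.log ((1 + jb x) ^ (3:ℕ)) :=
          Real.log_le_log (by linarith) h1
    _ = 3 * Real.log (1 + jb x) := by
          rw [Real.log_pow]
          norm_num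
  · refine ⟨3, by norm_num, fun x => ?_⟩
    unfold phiR phi
    rw [if_neg (by linarith), if_neg (by linarith), if_neg (by linarith), if_neg (by linarith)]
    have hy := one_le_jb x
    rw [Real.mul_rpow (by norm_num) (by linarith)]
    have h1 : (3:ℝ) ^ (1-β) ≤ 3 := by
      calc (3:ℝ) ^ (1-β) ≤ 3 ^ (1:ℝ) :=
            Real.rpow_le_rpow_of_exponent_le (by norm_num) (by linarith)
      _ = 3 := Real.rpow_one 3
    have h2 : (0:ℝ) ≤ jb x ^ (1-β) := Real.rpow_nonneg (jb_nonneg _) _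
    nlinarith

lemma phiR_gamma {β γ : ℝ} (hβγ : γ ≤ β) (hγ0 : 0 ≤ γ) :
    ∃ C > 0, ∀ x : ℝ, phiR γ (jb x) ≤ C * (jb x ^ (β - γ) * phi β x) := by
  have hβ0 : 0 ≤ β := le_trans hγ0 hβγ
  rcases lt_trichotomy 1 γ with hγ | hγ | hγ
  · -- 1 < γ hence 1 < β
    have hβ : 1 < β := lt_of_lt_of_le hγ hβγ
    refine ⟨1, one_pos, fun x => ?_⟩
    unfold phiR phi
    rw [if_pos hγ, if_pos hβ, one_mul, mul_one]
    calc (1:ℝ) = jb x ^ (0:ℝ) := (Real.rpow_zero _).symm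
    _ ≤ jb x ^ (β - γ) := Real.rpow_le_rpow_of_exponent_le (one_le_jb x) (by linarith)
  · -- γ = 1
    rcases eq_or_lt_of_le (hγ ▸ hβγ : (1:ℝ) ≤ β) with hβ | hβ
    · -- β = 1
      refine ⟨1, one_pos, fun x => ?_⟩
      unfold phiR phi
      rw [if_neg (by rw [← hγ]; exact lt_irrefl 1), if_pos hγ.symm,
        if_neg (by rw [← hβ]; exact lt_irrefl 1), if_pos hβ.symm,
        ← hβ, ← hγ, sub_self, Real.rpow_zero]
      linarith [Real.log_nonneg (show (1:ℝ) ≤ 1 + jb x by linarith [one_le_jb x])]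
    · -- 1 < β
      refine ⟨Real.log 2 + 1/(β-1), by
        have h1 : (0:ℝ) < Real.log 2 := Real.log_pos (by norm_num)
        have h2 : (0:ℝ) < β - 1 := by linarith
        positivity, fun x => ?_⟩
      unfold phiR phi
      rw [if_neg (by rw [← hγ]; exact lt_irrefl 1), if_pos hγ.symm, if_pos hβ, mul_one]
      have hy := one_le_jb x
      have hy0 := jb_pos x
      have hb1 : (0:ℝ) < β - 1 := by linarith
      have hpow1 : (1:ℝ) ≤ jb x ^ (β-1) := by
        calc (1:ℝ) = jb x ^ (0:ℝ) := (Real.rpow_zero _).symm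
        _ ≤ jb x ^ (β - 1) := Real.rpow_le_rpow_of_exponent_le hy (by linarith)
      have hlog : Real.log (jb x) ≤ jb x ^ (β-1) / (β-1) := by
        have h1 : Real.log (jb x ^ (β-1)) ≤ jb x ^ (β-1) - 1 :=
          Real.log_le_sub_one_of_pos (by positivity)
        rw [Real.log_rpow hy0] at h1
        rw [le_div_iff₀ hb1]
        nlinarith
      have h2 : Real.log (1 + jb x) ≤ Real.log (2 * jb x) :=
        Real.log_le_log (by linarith) (by linarith)
      have h3 : Real.log (2 * jb x) = Real.log 2 + Real.log (jb x) :=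
        Real.log_mul (by norm_num) (by linarith)
      have h4 : Real.log 2 ≤ Real.log 2 * jb x ^ (β-1) := by
        have := Real.log_pos (show (1:ℝ) < 2 by norm_num)
        nlinarith
      have hγβ : β - γ = β - 1 := by rw [← hγ]
      rw [hγβ]
      calc Real.log (1 + jb x) ≤ Real.log 2 + Real.log (jb x) := by linarith
      _ ≤ Real.log 2 * jb x ^ (β-1) + jb x ^ (β-1)/(β-1) := by linarith
      _ = (Real.log 2 + 1/(β-1)) * jb x ^ (β-1) := by ring
  · -- γ < 1
    obtain ⟨C1, hC1, hG1⟩ := phi_lower β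
    refine ⟨C1, hC1, fun x => ?_⟩
    unfold phiR
    rw [if_neg (by linarith), if_neg (by linarith)]
    have hy0 := jb_pos x
    have h1 : jb x ^ (1-γ) = jb x ^ (β-γ) * jb x ^ (1-β) := by
      rw [← Real.rpow_add hy0]
      ring_nf
    rw [h1]
    have h2 : (0:ℝ) ≤ jb x ^ (β-γ) := Real.rpow_nonneg (jb_nonneg _) _
    calc jb x ^ (β-γ) * jb x ^ (1-β) ≤ jb x ^ (β-γ) * (C1 * phi β x) :=
          mul_le_mul_of_nonneg_left (hG1 x) h2
    _ = C1 * (jb x ^ (β-γ) * phi β x) := by ring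

lemma main_est {β γ : ℝ} (hβγ : γ ≤ β) (hγ0 : 0 ≤ γ) (hs1 : 1 < β + γ) :
    ∃ C > 0, ∀ k : ℤ,
      ∑' n : ℤ, (jb ((n:ℝ) - (k:ℝ)) ^ (-β) * jb (n:ℝ) ^ (-γ))
        ≤ C * (jb (k:ℝ) ^ (-γ) * phi β (k:ℝ)) := by
  have hβ0 : 0 ≤ β := le_trans hγ0 hβγ
  obtain ⟨C1, hC1, hG1⟩ := phi_lower β
  obtain ⟨C2, hC2, hG2⟩ := phiR_gamma hβγ hγ0
  obtain ⟨C3, hC3, hG3⟩ := phiR_three hβ0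
  obtain ⟨CP, hCP, hP⟩ := int_partial hβ0
  obtain ⟨CQ, hCQ, hQ⟩ := int_partial hγ0
  obtain ⟨CT, hCT, hT⟩ := int_tail hs1
  refine ⟨2^β * CQ * C2 + 2^γ * CP * C3 + 2^β * CT * C1, by positivity, fun k => ?_⟩
  set κ := jb (k:ℝ) with hκ
  have hκ1 : 1 ≤ κ := one_le_jb _
  have hκ0 : 0 < κ := jb_pos _
  set K := |(k:ℝ)| with hK
  have hK0 : 0 ≤ K := abs_nonneg _
  have hKκ : K ≤ κ := abs_le_jb _
  set g : ℤ → ℝ := fun n => jb ((n:ℝ) - (k:ℝ)) ^ (-β) * jb (n:ℝ) ^ (-γ) with hg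
  set fB : ℤ → ℝ := fun n => 2^β * κ^(-β) * (if |(n:ℝ)| ≤ κ then jb (n:ℝ) ^ (-γ) else 0)
    with hfB
  set fA : ℤ → ℝ := fun n => 2^γ * κ^(-γ) *
      (if |(n:ℝ) - (k:ℝ)| ≤ 3*κ then jb ((n:ℝ)-(k:ℝ)) ^ (-β) else 0) with hfA
  set fC : ℤ → ℝ := fun n => 2^β * (if 2*K < |(n:ℝ)| then jb (n:ℝ) ^ (-(β+γ)) else 0)
    with hfC
  have hfB_nn : ∀ n, 0 ≤ fB n := by
    intro n
    simp only [hfB]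
    have : (0:ℝ) ≤ (if |(n:ℝ)| ≤ κ then jb (n:ℝ) ^ (-γ) else 0) := by
      split_ifs
      exacts [Real.rpow_nonneg (jb_nonneg _) _, le_refl 0]
    positivity
  have hfA_nn : ∀ n, 0 ≤ fA n := by
    intro n
    simp only [hfA]
    have : (0:ℝ) ≤ (if |(n:ℝ) - (k:ℝ)| ≤ 3*κ then jb ((n:ℝ)-(k:ℝ)) ^ (-β) else 0) := by
      split_ifs
      exacts [Real.rpow_nonneg (jb_nonneg _) _, le_refl 0]
    positivity
  have hfC_nn : ∀ n, 0 ≤ fC n := by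
    intro n
    simp only [hfC]
    have : (0:ℝ) ≤ (if 2*K < |(n:ℝ)| then jb (n:ℝ) ^ (-(β+γ)) else 0) := by
      split_ifs
      exacts [Real.rpow_nonneg (jb_nonneg _) _, le_refl 0]
    positivity
  -- pointwise bound
  have hpt : ∀ n : ℤ, g n ≤ fB n + fA n + fC n := by
    intro n
    have ha0 : 0 < jb ((n:ℝ) - (k:ℝ)) := jb_pos _
    have hb0 : 0 < jb (n:ℝ) := jb_pos _
    have ha_nn : 0 ≤ jb ((n:ℝ)-(k:ℝ)) ^ (-β) := Real.rpow_nonneg (jb_nonneg _) _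
    have hb_nn : 0 ≤ jb (n:ℝ) ^ (-γ) := Real.rpow_nonneg (jb_nonneg _) _
    by_cases hc : 2*K < |(n:ℝ)|
    · -- region C
      have h1 : |(n:ℝ)| ≤ 2 * |(n:ℝ)-(k:ℝ)| := by
        have h2 : |(n:ℝ)| - K ≤ |(n:ℝ)-(k:ℝ)| := by
          have := abs_sub_abs_le_abs_sub (n:ℝ) (k:ℝ)
          rw [← hK] at this
          linarith
        linarith
      have h2 : jb (n:ℝ) ≤ 2 * jb ((n:ℝ)-(k:ℝ)) := jb_le_two_mul h1
      have h3 : jb ((n:ℝ)-(k:ℝ)) ^ (-β) ≤ (jb (n:ℝ)/2) ^ (-β) :=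
        Real.rpow_le_rpow_of_nonpos (by positivity) (by linarith) (by linarith)
      have h4 : (jb (n:ℝ)/2) ^ (-β) = 2^β * jb (n:ℝ) ^ (-β) := by
        rw [Real.div_rpow (jb_nonneg _) (by norm_num),
          Real.rpow_neg (by norm_num : (0:ℝ) ≤ 2)]
        field_simp
      have h5 : g n ≤ 2^β * jb (n:ℝ) ^ (-β) * jb (n:ℝ) ^ (-γ) := by
        simp only [hg]
        apply mul_le_mul_of_nonneg_right _ hb_nn
        rw [← h4]
        exact h3
      have h6 : 2^β * jb (n:ℝ) ^ (-β) * jb (n:ℝ) ^ (-γ) = fC n := by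
        simp only [hfC]
        rw [if_pos hc, show -(β+γ) = -β + -γ by ring, Real.rpow_add hb0]
        ring
      have := hfB_nn n
      have := hfA_nn n
      linarith [h6 ▸ h5]
    · push_neg at hc
      by_cases hb : 2*|(n:ℝ)| ≤ K
      · -- region B
        have h1 : K ≤ 2 * |(n:ℝ)-(k:ℝ)| := by
          have h2 : K - |(n:ℝ)| ≤ |(n:ℝ)-(k:ℝ)| := by
            have := abs_sub_abs_le_abs_sub (k:ℝ) (n:ℝ)
            rw [← hK, abs_sub_comm] at this
            linarith
          linarith
        have h2 : κ ≤ 2 * jb ((n:ℝ)-(k:ℝ)) := by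
          apply jb_le_two_mul
          rw [← hK]
          linarith
        have h3 : jb ((n:ℝ)-(k:ℝ)) ^ (-β) ≤ (κ/2) ^ (-β) :=
          Real.rpow_le_rpow_of_nonpos (by positivity) (by linarith) (by linarith)
        have h4 : (κ/2) ^ (-β) = 2^β * κ ^ (-β) := by
          rw [Real.div_rpow (by positivity) (by norm_num),
            Real.rpow_neg (by norm_num : (0:ℝ) ≤ 2)]
          field_simp
        have h5 : g n ≤ fB n := by
          simp only [hg, hfB]
          rw [if_pos (show |(n:ℝ)| ≤ κ by linarith)]
          calc jb ((n:ℝ) - (k:ℝ)) ^ (-β) * jb (n:ℝ) ^ (-γ)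
              ≤ (κ/2) ^ (-β) * jb (n:ℝ) ^ (-γ) := mul_le_mul_of_nonneg_right h3 hb_nn
          _ = 2^β * κ^(-β) * jb (n:ℝ) ^ (-γ) := by rw [h4]
        have := hfA_nn n
        have := hfC_nn n
        linarith
      · -- region A
        push_neg at hb
        have h2 : κ ≤ 2 * jb (n:ℝ) := by
          apply jb_le_two_mul
          rw [← hK]
          linarith
        have h3 : jb (n:ℝ) ^ (-γ) ≤ (κ/2) ^ (-γ) :=
          Real.rpow_le_rpow_of_nonpos (by positivity) (by linarith) (by linarith)
        have h4 : (κ/2) ^ (-γ) = 2^γ * κ ^ (-γ) := by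
          rw [Real.div_rpow (by positivity) (by norm_num),
            Real.rpow_neg (by norm_num : (0:ℝ) ≤ 2)]
          field_simp
        have hind : |(n:ℝ) - (k:ℝ)| ≤ 3*κ := by
          have := abs_sub (n:ℝ) (k:ℝ)
          rw [← hK] at this
          linarith
        have h5 : g n ≤ fA n := by
          simp only [hg, hfA]
          rw [if_pos hind]
          calc jb ((n:ℝ) - (k:ℝ)) ^ (-β) * jb (n:ℝ) ^ (-γ)
              ≤ jb ((n:ℝ) - (k:ℝ)) ^ (-β) * (κ/2) ^ (-γ) :=
                mul_le_mul_of_nonneg_left h3 ha_nn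
          _ = 2^γ * κ^(-γ) * jb ((n:ℝ)-(k:ℝ)) ^ (-β) := by rw [h4]; ring
        have := hfB_nn n
        have := hfC_nn n
        linarith
  -- summability
  have hsB : Summable fB := (summable_ind_int (fun n : ℤ => jb (n:ℝ) ^ (-γ))).mul_left _
  have hW : Summable (fun m : ℤ => if |(m:ℝ)| ≤ 3*κ then jb (m:ℝ) ^ (-β) else 0) :=
    summable_ind_int _
  have hsA : Summable fA := by
    apply Summable.mul_left
    have h1 := ((Equiv.subRight k).summable_iff
      (f := fun m : ℤ => if |(m:ℝ)| ≤ 3*κ then jb (m:ℝ) ^ (-β) else 0)).mpr hW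
    apply h1.congr
    intro n
    simp only [Function.comp_apply, Equiv.subRight_apply]
    push_cast
    rfl
  have hsC : Summable fC := by
    apply Summable.mul_left
    apply Summable.of_nonneg_of_le (f := fun n : ℤ => jb (n:ℝ) ^ (-(β+γ)))
    · intro n
      split_ifs
      exacts [Real.rpow_nonneg (jb_nonneg _) _, le_refl 0]
    · intro n
      split_ifs
      exacts [le_refl _, Real.rpow_nonneg (jb_nonneg _) _]
    · exact summable_jb_int hs1
  have hsg : Summable g :=
    Summable.of_nonneg_of_le
      (fun n => mul_nonneg (Real.rpow_nonneg (jb_nonneg _) _) (Real.rpow_nonneg (jb_nonneg _) _))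
      hpt ((hsB.add hsA).add hsC)
  -- sum bound
  have hsplit : ∑' n, g n ≤ (∑' n, fB n) + (∑' n, fA n) + (∑' n, fC n) := by
    calc ∑' n, g n ≤ ∑' n, (fB n + fA n + fC n) :=
          Summable.tsum_le_tsum hpt hsg ((hsB.add hsA).add hsC)
    _ = (∑' n, fB n) + (∑' n, fA n) + (∑' n, fC n) := by
          rw [Summable.tsum_add (hsB.add hsA) hsC, Summable.tsum_add hsB hsA]
  have hTarget_nn : 0 ≤ κ^(-γ) * phi β (k:ℝ) :=
    mul_nonneg (Real.rpow_nonneg (jb_nonneg _) _) (le_of_lt (phi_pos β _))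
  -- region B sum
  have hB_bound : ∑' n, fB n ≤ 2^β * CQ * C2 * (κ^(-γ) * phi β (k:ℝ)) := by
    have e1 : ∑' n, fB n = 2^β * κ^(-β) *
        ∑' n : ℤ, (if |(n:ℝ)| ≤ κ then jb (n:ℝ) ^ (-γ) else 0) := by
      simp only [hfB]
      exact tsum_mul_left
    rw [e1]
    have h1 := hQ κ hκ1
    have h2 := hG2 (k:ℝ)
    have h3 : ∑' n : ℤ, (if |(n:ℝ)| ≤ κ then jb (n:ℝ) ^ (-γ) else 0)
        ≤ CQ * (C2 * (κ ^ (β - γ) * phi β (k:ℝ))) := by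
      calc ∑' n : ℤ, (if |(n:ℝ)| ≤ κ then jb (n:ℝ) ^ (-γ) else 0) ≤ CQ * phiR γ κ := h1
      _ ≤ CQ * (C2 * (κ ^ (β - γ) * phi β (k:ℝ))) :=
            mul_le_mul_of_nonneg_left h2 (le_of_lt hCQ)
    calc 2^β * κ^(-β) * ∑' n : ℤ, (if |(n:ℝ)| ≤ κ then jb (n:ℝ) ^ (-γ) else 0)
        ≤ 2^β * κ^(-β) * (CQ * (C2 * (κ ^ (β - γ) * phi β (k:ℝ)))) := by
          apply mul_le_mul_of_nonneg_left h3 (by positivity)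
    _ = 2^β * CQ * C2 * ((κ^(-β) * κ^(β-γ)) * phi β (k:ℝ)) := by ring
    _ = 2^β * CQ * C2 * (κ^(-γ) * phi β (k:ℝ)) := by
          rw [← Real.rpow_add hκ0]
          ring_nf
  -- region A sum
  have hA_bound : ∑' n, fA n ≤ 2^γ * CP * C3 * (κ^(-γ) * phi β (k:ℝ)) := by
    have e1 : ∑' n, fA n = 2^γ * κ^(-γ) *
        ∑' n : ℤ, (if |(n:ℝ) - (k:ℝ)| ≤ 3*κ then jb ((n:ℝ)-(k:ℝ)) ^ (-β) else 0) := by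
      simp only [hfA]
      exact tsum_mul_left
    have e2 : ∑' n : ℤ, (if |(n:ℝ) - (k:ℝ)| ≤ 3*κ then jb ((n:ℝ)-(k:ℝ)) ^ (-β) else 0)
        = ∑' m : ℤ, (if |(m:ℝ)| ≤ 3*κ then jb (m:ℝ) ^ (-β) else 0) := by
      rw [← (Equiv.subRight k).tsum_eq
        (f := fun m : ℤ => if |(m:ℝ)| ≤ 3*κ then jb (m:ℝ) ^ (-β) else 0)]
      apply tsum_congr
      intro n
      simp only [Equiv.subRight_apply]
      push_cast
      rfl
    rw [e1, e2]
    have h1 : ∑' m : ℤ, (if |(m:ℝ)| ≤ 3*κ then jb (m:ℝ) ^ (-β) else 0)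
        ≤ CP * (C3 * phi β (k:ℝ)) := by
      calc ∑' m : ℤ, (if |(m:ℝ)| ≤ 3*κ then jb (m:ℝ) ^ (-β) else 0)
          ≤ CP * phiR β (3*κ) := hP (3*κ) (by linarith)
      _ ≤ CP * (C3 * phi β (k:ℝ)) := mul_le_mul_of_nonneg_left (hG3 (k:ℝ)) (le_of_lt hCP)
    calc 2^γ * κ^(-γ) * ∑' m : ℤ, (if |(m:ℝ)| ≤ 3*κ then jb (m:ℝ) ^ (-β) else 0)
        ≤ 2^γ * κ^(-γ) * (CP * (C3 * phi β (k:ℝ))) := by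
          apply mul_le_mul_of_nonneg_left h1 (by positivity)
    _ = 2^γ * CP * C3 * (κ^(-γ) * phi β (k:ℝ)) := by ring
  -- region C sum
  have hC_bound : ∑' n, fC n ≤ 2^β * CT * C1 * (κ^(-γ) * phi β (k:ℝ)) := by
    have e1 : ∑' n, fC n = 2^β *
        ∑' n : ℤ, (if 2*K < |(n:ℝ)| then jb (n:ℝ) ^ (-(β+γ)) else 0) := by
      simp only [hfC]
      exact tsum_mul_left
    rw [e1]
    have h1 : ∑' n : ℤ, (if 2*K < |(n:ℝ)| then jb (n:ℝ) ^ (-(β+γ)) else 0)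
        ≤ CT * jb (2*K) ^ (1 - (β+γ)) := hT (2*K) (by linarith)
    have h2 : jb (2*K) ^ (1-(β+γ)) ≤ κ ^ (1-(β+γ)) := by
      apply Real.rpow_le_rpow_of_nonpos hκ0 _ (by linarith)
      apply jb_mono
      rw [← hK, abs_of_nonneg (by linarith : (0:ℝ) ≤ 2*K)]
      linarith
    have h3 : κ ^ (1-(β+γ)) = κ^(-γ) * κ^(1-β) := by
      rw [← Real.rpow_add hκ0]
      ring_nf
    have h4 : κ^(1-β) ≤ C1 * phi β (k:ℝ) := hG1 (k:ℝ)
    have h5 : κ ^ (1-(β+γ)) ≤ κ^(-γ) * (C1 * phi β (k:ℝ)) := by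
      rw [h3]
      exact mul_le_mul_of_nonneg_left h4 (Real.rpow_nonneg (by positivity) _)
    calc 2^β * ∑' n : ℤ, (if 2*K < |(n:ℝ)| then jb (n:ℝ) ^ (-(β+γ)) else 0)
        ≤ 2^β * (CT * jb (2*K) ^ (1 - (β+γ))) := by
          apply mul_le_mul_of_nonneg_left h1 (by positivity)
    _ ≤ 2^β * (CT * (κ^(-γ) * (C1 * phi β (k:ℝ)))) := by
          apply mul_le_mul_of_nonneg_left _ (by positivity)
          apply mul_le_mul_of_nonneg_left _ (le_of_lt hCT)
          exact le_trans h2 h5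
    _ = 2^β * CT * C1 * (κ^(-γ) * phi β (k:ℝ)) := by ring
  calc ∑' n, g n ≤ (∑' n, fB n) + (∑' n, fA n) + (∑' n, fC n) := hsplit
  _ ≤ (2^β * CQ * C2 + 2^γ * CP * C3 + 2^β * CT * C1) * (κ^(-γ) * phi β (k:ℝ)) := by
        rw [add_mul, add_mul]
        exact add_le_add (add_le_add hB_bound hA_bound) hC_bound

/-- discrete convolution estimate for Japanese brackets. -/
theorem stmt_0 (β γ : ℝ) (hβγ : γ ≤ β) (hγ : 0 ≤ γ) (h : 1 < β + γ) :
    ∃ C > 0, ∀ k₁ k₂ : ℤ,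
      ∑' n : ℤ, 1 / (jb ((n : ℝ) - (k₁ : ℝ)) ^ β * jb ((n : ℝ) - (k₂ : ℝ)) ^ γ)
        ≤ C * jb ((k₁ : ℝ) - (k₂ : ℝ)) ^ (-γ) * phi β ((k₁ : ℝ) - (k₂ : ℝ)) := by
  obtain ⟨C, hC, hmain⟩ := main_est hβγ hγ h
  refine ⟨C, hC, fun k₁ k₂ => ?_⟩
  have hkk : (k₁ : ℝ) - (k₂ : ℝ) = ((k₁ - k₂ : ℤ) : ℝ) := by push_cast; ring
  have e0 : ∑' n : ℤ, 1 / (jb ((n : ℝ) - (k₁ : ℝ)) ^ β * jb ((n : ℝ) - (k₂ : ℝ)) ^ γ)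
      = ∑' n : ℤ, (jb ((n:ℝ) - ((k₁ - k₂ : ℤ):ℝ)) ^ (-β) * jb ((n:ℝ)) ^ (-γ)) := by
    rw [← (Equiv.addRight k₂).tsum_eq
      (f := fun n : ℤ => 1 / (jb ((n : ℝ) - (k₁ : ℝ)) ^ β * jb ((n : ℝ) - (k₂ : ℝ)) ^ γ))]
    apply tsum_congr
    intro n
    simp only [Equiv.coe_addRight]
    have c1 : ((n + k₂ : ℤ) : ℝ) - (k₁ : ℝ) = (n:ℝ) - ((k₁ - k₂ : ℤ):ℝ) := by push_cast; ring
    have c2 : ((n + k₂ : ℤ) : ℝ) - (k₂ : ℝ) = (n:ℝ) := by push_cast; ring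
    rw [c1, c2, Real.rpow_neg (jb_nonneg _), Real.rpow_neg (jb_nonneg _), ← mul_inv, one_div]
  rw [e0, hkk, mul_assoc]
  exact hmain (k₁ - k₂)
end

section
/- Fix α ∈ (1/2, 1) and c ≥ 1. Define f_c : ℝ → ℝ by f_c(x) = |x + c|^{2α} − |x − c|^{2α}. Then for every real x, the derivative satisfies f_c'(x) ≥ C_α · c / max(c, |x|)^{2−2α} for some constant C_α > 0 depending only on α. -/
open Real

/-- Bernoulli-type inequality: for `0 < β ≤ 1` and `0 ≤ a ≤ b`, `0 < b`,
`β * b^(β-1) * (b - a) ≤ b^β - a^β`. -/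
lemma bernoulli_rpow {β a b : ℝ} (hβ0 : 0 < β) (hβ1 : β ≤ 1) (ha : 0 ≤ a) (hab : a ≤ b)
    (hb : 0 < b) : β * b ^ (β - 1) * (b - a) ≤ b ^ β - a ^ β := by
  set t := a / b with ht
  have ht0 : 0 ≤ t := div_nonneg ha hb.le
  have key : t ^ β * 1 ^ (1 - β) ≤ β * t + (1 - β) * 1 :=
    Real.geom_mean_le_arith_mean2_weighted hβ0.le (by linarith) ht0 zero_le_one (by ring)
  rw [Real.one_rpow, mul_one, mul_one] at key
  have hA : a ^ β = t ^ β * b ^ β := by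
    rw [← Real.mul_rpow ht0 hb.le, ht, div_mul_cancel₀ _ hb.ne']
  have hB : b ^ β = b ^ (β - 1) * b := by
    rw [← Real.rpow_add_one hb.ne' (β - 1)]; ring_nf
  have hB1 : 0 ≤ b ^ (β - 1) := Real.rpow_nonneg hb.le _
  have htb : t * b = a := div_mul_cancel₀ _ hb.ne'
  have h5 : a ^ β ≤ (β * t + (1 - β)) * b ^ β := by
    rw [hA]
    exact mul_le_mul_of_nonneg_right key (Real.rpow_nonneg hb.le _)
  have h7 : (β * t + (1 - β)) * b ^ β = β * (a * b ^ (β - 1)) + (1 - β) * (b ^ (β - 1) * b) := by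
    rw [hB, ← htb]; ring
  have h6 : a ^ β ≤ β * (a * b ^ (β - 1)) + (1 - β) * (b ^ (β - 1) * b) := by
    rw [← h7]; exact h5
  rw [hB]
  nlinarith [h6]

/-- Core inequality for `x ≥ 0`. -/
lemma core_ineq {p c x : ℝ} (hp1 : 1 < p) (hp2 : p < 2) (hc : 1 ≤ c) (hx : 0 ≤ x) :
    (p - 1) * c / (max c x) ^ (2 - p) ≤
      p * |x + c| ^ (p - 2) * (x + c) - p * |x - c| ^ (p - 2) * (x - c) := by
  have hc0 : (0:ℝ) < c := lt_of_lt_of_le one_pos hc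
  have hxc : 0 < x + c := by linarith
  rcases le_or_gt x c with hxc' | hxc'
  · -- x ≤ c : max = c
    rw [max_eq_left hxc']
    have h1 : p * |x - c| ^ (p - 2) * (x - c) ≤ 0 := by
      apply mul_nonpos_of_nonneg_of_nonpos
      · positivity
      · linarith
    have h2 : p * c ^ (p - 1) ≤ p * |x + c| ^ (p - 2) * (x + c) := by
      rw [abs_of_pos hxc, mul_assoc, ← Real.rpow_add_one hxc.ne' (p-2),
        show p - 2 + 1 = p - 1 by ring]
      have : c ^ (p - 1) ≤ (x + c) ^ (p - 1) :=
        Real.rpow_le_rpow hc0.le (by linarith) (by linarith)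
      exact mul_le_mul_of_nonneg_left this (by linarith)
    have hcp : (0:ℝ) < c ^ (2 - p) := Real.rpow_pos_of_pos hc0 _
    rw [div_le_iff₀ hcp]
    have hmul : c ^ (p - 1) * c ^ (2 - p) = c := by
      rw [← Real.rpow_add hc0, show p - 1 + (2 - p) = 1 by ring, Real.rpow_one]
    nlinarith [h1, h2, Real.rpow_nonneg hc0.le (p-1), hcp]
  · -- c < x : max = x
    rw [max_eq_right hxc'.le]
    have hx0 : 0 < x := lt_trans hc0 hxc'
    have hxm : 0 < x - c := by linarith
    have e1 : p * |x + c| ^ (p - 2) * (x + c) = p * (x + c) ^ (p - 1) := by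
      rw [abs_of_pos hxc, mul_assoc, ← Real.rpow_add_one hxc.ne']; ring_nf
    have e2 : p * |x - c| ^ (p - 2) * (x - c) = p * (x - c) ^ (p - 1) := by
      rw [abs_of_pos hxm, mul_assoc, ← Real.rpow_add_one hxm.ne']; ring_nf
    rw [e1, e2]
    -- Bernoulli with β := p - 1, a := x - c, b := x + c
    have hB := bernoulli_rpow (β := p - 1) (a := x - c) (b := x + c)
      (by linarith) (by linarith) hxm.le (by linarith) hxc
    have hsub : x + c - (x - c) = 2 * c := by ring
    rw [hsub] at hB
    -- (x+c)^(p-2) ≥ (2x)^(p-2) ≥ (1/2) x^(p-2)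
    have h3 : (2 * x) ^ (p - 2) ≤ (x + c) ^ (p - 2) :=
      Real.rpow_le_rpow_of_nonpos hxc (by linarith) (by linarith)
    have h4 : (2 * x) ^ (p - 2) = 2 ^ (p - 2) * x ^ (p - 2) :=
      Real.mul_rpow (by norm_num) hx0.le
    have h5 : (1:ℝ)/2 ≤ 2 ^ (p - 2) := by
      have : (2:ℝ) ^ (-1:ℝ) ≤ 2 ^ (p - 2) :=
        Real.rpow_le_rpow_of_exponent_le one_le_two (by linarith)
      rw [Real.rpow_neg_one] at this
      linarith
    have hxp : 0 ≤ x ^ (p - 2) := Real.rpow_nonneg hx0.le _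
    have hLHS : (p - 1) * c / x ^ (2 - p) = (p - 1) * c * x ^ (p - 2) := by
      rw [show p - 2 = -(2 - p) by ring, Real.rpow_neg hx0.le, div_eq_mul_inv]
    rw [hLHS]
    have hfinal : (p - 1) * c * x ^ (p - 2) ≤ p * ((p - 1) * (x + c) ^ (p - 2) * (2 * c)) := by
      have hstep : (1/2) * x ^ (p - 2) ≤ (x + c) ^ (p - 2) := by
        calc (1/2) * x ^ (p - 2) ≤ 2 ^ (p - 2) * x ^ (p - 2) :=
              mul_le_mul_of_nonneg_right h5 hxp
          _ = (2 * x) ^ (p - 2) := h4.symm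
          _ ≤ (x + c) ^ (p - 2) := h3
      have hppc : (0:ℝ) < p * (p - 1) * (2 * c) :=
        mul_pos (mul_pos (by linarith) (by linarith)) (by linarith)
      have hmm := mul_le_mul_of_nonneg_left hstep hppc.le
      have h0 : (0:ℝ) ≤ (p - 1) * (p - 1) * c * x ^ (p - 2) :=
        mul_nonneg (mul_nonneg (mul_nonneg (by linarith) (by linarith)) hc0.le) hxp
      nlinarith [hmm, h0]
    calc (p - 1) * c * x ^ (p - 2)
        ≤ p * ((p - 1) * (x + c) ^ (p - 2) * (2 * c)) := hfinal
      _ = p * ((p - 1) * (x + c) ^ (p - 1 - 1) * (2 * c)) := by ring_nf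
      _ ≤ p * ((x + c) ^ (p - 1) - (x - c) ^ (p - 1)) :=
          mul_le_mul_of_nonneg_left hB (by linarith)
      _ = p * (x + c) ^ (p - 1) - p * (x - c) ^ (p - 1) := by ring

/-- derivative lower bound for `f_c(x) = |x+c|^{2α} - |x-c|^{2α}`. -/
theorem stmt_3 (α : ℝ) (hα : 1 / 2 < α) (hα1 : α < 1) :
    ∃ C > 0, ∀ c : ℝ, 1 ≤ c → ∀ x : ℝ,
      C * c / (max c |x|) ^ (2 - 2 * α)
        ≤ deriv (fun y : ℝ => |y + c| ^ (2 * α) - |y - c| ^ (2 * α)) x := by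
  set p := 2 * α with hpdef
  have hp1 : 1 < p := by simp only [hpdef]; linarith
  have hp2 : p < 2 := by simp only [hpdef]; linarith
  refine ⟨p - 1, by linarith, fun c hc x => ?_⟩
  have hc0 : (0:ℝ) < c := lt_of_lt_of_le one_pos hc
  -- compute deriv
  have hd1 : HasDerivAt (fun y : ℝ => |y + c| ^ p) (p * |x + c| ^ (p - 2) * (x + c)) x := by
    have := (hasDerivAt_abs_rpow (x + c) hp1).comp x ((hasDerivAt_id x).add_const c)
    simpa [Function.comp_def] using this
  have hd2 : HasDerivAt (fun y : ℝ => |y - c| ^ p) (p * |x - c| ^ (p - 2) * (x - c)) x := by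
    have := (hasDerivAt_abs_rpow (x - c) hp1).comp x ((hasDerivAt_id x).sub_const c)
    simpa [Function.comp_def] using this
  have hd : deriv (fun y : ℝ => |y + c| ^ p - |y - c| ^ p) x
      = p * |x + c| ^ (p - 2) * (x + c) - p * |x - c| ^ (p - 2) * (x - c) := (hd1.sub hd2).deriv
  rw [hd]
  rcases le_or_gt 0 x with hx | hx
  · rw [abs_of_nonneg hx]
    exact core_ineq hp1 hp2 hc hx
  · rw [abs_of_neg hx]
    have := core_ineq hp1 hp2 hc (x := -x) (by linarith)
    have heq : p * |-x + c| ^ (p - 2) * (-x + c) - p * |-x - c| ^ (p - 2) * (-x - c)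
        = p * |x + c| ^ (p - 2) * (x + c) - p * |x - c| ^ (p - 2) * (x - c) := by
      rw [show -x + c = -(x - c) by ring, show -x - c = -(x + c) by ring, abs_neg, abs_neg]
      ring
    rwa [heq] at this
end
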